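/- In GL_2(Z/l^(k+1) Z) with l an odd prime, the centralizer of the matrix [[1, l^v],[0, 1]] (for 0 ≤ v ≤ k) consists of the matrices [[a, b],[c, d]] with (a - d)·l^v = 0 and c·l^v = 0 in Z/l^(k+1)Z, and has cardinality φ(l^(k+1)) · l^v · l^(k+1) · l^v. -/

import Mathlib

lemma cent_iff {n : ℕ} [NeZero n] (t : ZMod n) (u M : GL (Fin 2) (ZMod n))
    (hu : (u : Matrix (Fin 2) (Fin 2) (ZMod n)) = !![1, t; 0, 1]) :
    M ∈ Subgroup.centralizer {u} ↔
      ((M : Matrix (Fin 2) (Fin 2) (ZMod n)) 0 0 -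
        (M : Matrix (Fin 2) (Fin 2) (ZMod n)) 1 1) * t = 0 ∧
      (M : Matrix (Fin 2) (Fin 2) (ZMod n)) 1 0 * t = 0 := by
  rw [Subgroup.mem_centralizer_singleton_iff, Units.ext_iff]
  set A : Matrix (Fin 2) (Fin 2) (ZMod n) := (M : Matrix (Fin 2) (Fin 2) (ZMod n)) with hA
  have e1 : (↑(M * u) : Matrix (Fin 2) (Fin 2) (ZMod n)) = A * !![1, t; 0, 1] := by
    simp [Units.val_mul, hu, hA]
  have e2 : (↑(u * M) : Matrix (Fin 2) (Fin 2) (ZMod n)) = !![1, t; 0, 1] * A := by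
    simp [Units.val_mul, hu, hA]
  rw [e1, e2]
  constructor
  · intro h
    have h' := Matrix.ext_iff.mpr h
    have h00 := h' 0 0
    have h01 := h' 0 1
    simp [Matrix.mul_apply, Fin.sum_univ_two] at h00 h01
    exact ⟨by linear_combination h01, by linear_combination h00⟩
  · rintro ⟨h1, h2⟩
    ext i j
    fin_cases i <;> fin_cases j <;> simp [Matrix.mul_apply, Fin.sum_univ_two] <;>
      first | linear_combination h1 | linear_combination h2
lemma ann_dvd (l k v : ℕ) (hl : l.Prime) (hv : v ≤ k) (x : ZMod (l ^ (k + 1))) :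
    x * (l : ZMod (l ^ (k + 1))) ^ v = 0 ↔ l ^ (k + 1 - v) ∣ x.val := by
  haveI : NeZero (l ^ (k + 1)) := ⟨pow_ne_zero _ hl.pos.ne'⟩
  have hx : ((x.val * l ^ v : ℕ) : ZMod (l ^ (k + 1))) = x * (l : ZMod (l ^ (k + 1))) ^ v := by
    push_cast
    rw [ZMod.natCast_val, ZMod.cast_id]
  rw [← hx, ZMod.natCast_eq_zero_iff]
  obtain ⟨m, hm⟩ : ∃ m, x.val = m := ⟨_, rfl⟩
  rw [hm]
  have hsplit : l ^ (k + 1) = l ^ (k + 1 - v) * l ^ v := by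
    rw [← pow_add]; congr 1; omega
  rw [hsplit, Nat.mul_dvd_mul_iff_right (pow_pos hl.pos v)]

lemma card_ann (l k v : ℕ) (hl : l.Prime) (hv : v ≤ k) :
    Nat.card {x : ZMod (l ^ (k + 1)) // x * (l : ZMod (l ^ (k + 1))) ^ v = 0} = l ^ v := by
  haveI : NeZero (l ^ (k + 1)) := ⟨pow_ne_zero _ hl.pos.ne'⟩
  haveI : NeZero (l ^ v) := ⟨pow_ne_zero _ hl.pos.ne'⟩
  set w := k + 1 - v with hw
  have hwv : l ^ w * l ^ v = l ^ (k + 1) := by rw [← pow_add]; congr 1; omega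
  set f : ZMod (l ^ v) → {x : ZMod (l ^ (k + 1)) // x * (l : ZMod (l ^ (k + 1))) ^ v = 0} :=
    fun a => ⟨((a.val * l ^ w : ℕ) : ZMod (l ^ (k + 1))), by
      rw [ann_dvd l k v hl hv]
      rw [ZMod.val_cast_of_lt]
      · exact ⟨a.val, mul_comm _ _⟩
      · calc a.val * l ^ w < l ^ v * l ^ w := by
              exact (Nat.mul_lt_mul_right (pow_pos hl.pos w)).mpr (ZMod.val_lt a)
          _ = l ^ (k + 1) := by rw [mul_comm]; exact hwv⟩ with hf
  have hbij : Function.Bijective f := by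
    constructor
    · intro a b hab
      have h1 : a.val * l ^ w < l ^ (k + 1) := by
        calc a.val * l ^ w < l ^ v * l ^ w :=
              (Nat.mul_lt_mul_right (pow_pos hl.pos w)).mpr (ZMod.val_lt a)
          _ = l ^ (k + 1) := by rw [mul_comm]; exact hwv
      have h2 : b.val * l ^ w < l ^ (k + 1) := by
        calc b.val * l ^ w < l ^ v * l ^ w :=
              (Nat.mul_lt_mul_right (pow_pos hl.pos w)).mpr (ZMod.val_lt b)
          _ = l ^ (k + 1) := by rw [mul_comm]; exact hwv
      have := congrArg (fun y => (y : {x : ZMod (l ^ (k + 1)) // x * (l : ZMod (l ^ (k + 1))) ^ v = 0}).1.val) hab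
      simp only [hf] at this
      rw [ZMod.val_cast_of_lt h1, ZMod.val_cast_of_lt h2] at this
      have hval : a.val = b.val :=
        Nat.eq_of_mul_eq_mul_right (pow_pos hl.pos w) this
      exact ZMod.val_injective _ hval
    · rintro ⟨x, hx⟩
      rw [ann_dvd l k v hl hv] at hx
      obtain ⟨m, hm⟩ := hx
      have hmlt : m < l ^ v := by
        by_contra hcon
        push_neg at hcon
        have : l ^ (k + 1) ≤ x.val := by
          calc l ^ (k + 1) = l ^ w * l ^ v := hwv.symm
            _ = l ^ v * l ^ w := mul_comm _ _
            _ ≤ m * l ^ w := Nat.mul_le_mul_right _ hcon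
            _ = l ^ w * m := mul_comm _ _
            _ = x.val := hm.symm
        exact absurd (ZMod.val_lt x) (by omega)
      refine ⟨(m : ZMod (l ^ v)), ?_⟩
      apply Subtype.ext
      simp only [hf]
      rw [ZMod.val_cast_of_lt hmlt]
      have : (x.val : ZMod (l ^ (k + 1))) = x := by rw [ZMod.natCast_val, ZMod.cast_id]
      rw [← this, hm, mul_comm]
  rw [← Nat.card_eq_of_bijective f hbij, Nat.card_zmod]

lemma unit_iff_pi (l k : ℕ) (hl : l.Prime) (x : ZMod (l ^ (k + 1))) :
    IsUnit x ↔ IsUnit (ZMod.castHom (dvd_pow_self l (Nat.succ_ne_zero k)) (ZMod l) x) := by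
  haveI : NeZero (l ^ (k + 1)) := ⟨pow_ne_zero _ hl.pos.ne'⟩
  haveI : Fact l.Prime := ⟨hl⟩
  constructor
  · exact fun h => h.map _
  · intro h
    by_contra hx
    have hval : (x.val : ZMod (l ^ (k + 1))) = x := by rw [ZMod.natCast_val, ZMod.cast_id]
    rw [← hval, ZMod.isUnit_iff_coprime] at hx
    rw [Nat.coprime_pow_right_iff (Nat.succ_pos k)] at hx
    have hdvd : l ∣ x.val := by
      by_contra hd
      exact hx ((Nat.coprime_comm.mp (hl.coprime_iff_not_dvd.mpr hd)))
    have : ZMod.castHom (dvd_pow_self l (Nat.succ_ne_zero k)) (ZMod l) x = 0 := by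
      rw [← hval, map_natCast, ZMod.natCast_eq_zero_iff]
      exact hdvd
    rw [this] at h
    exact not_isUnit_zero h

lemma pi_zero (l k v : ℕ) (hl : l.Prime) (hv : v ≤ k) (x : ZMod (l ^ (k + 1)))
    (hx : x * (l : ZMod (l ^ (k + 1))) ^ v = 0) :
    ZMod.castHom (dvd_pow_self l (Nat.succ_ne_zero k)) (ZMod l) x = 0 := by
  haveI : NeZero (l ^ (k + 1)) := ⟨pow_ne_zero _ hl.pos.ne'⟩
  rw [ann_dvd l k v hl hv] at hx
  have hdvd : l ∣ x.val := dvd_trans (dvd_pow_self l (by omega : k + 1 - v ≠ 0)) hx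
  have hval : (x.val : ZMod (l ^ (k + 1))) = x := by rw [ZMod.natCast_val, ZMod.cast_id]
  rw [← hval, map_natCast, ZMod.natCast_eq_zero_iff]
  exact hdvd

lemma card_cent (l k v : ℕ) (hl : l.Prime) (hv : v ≤ k)
    (u : GL (Fin 2) (ZMod (l ^ (k + 1))))
    (hu : (u : Matrix (Fin 2) (Fin 2) (ZMod (l ^ (k + 1)))) =
      !![1, (l : ZMod (l ^ (k + 1))) ^ v; 0, 1]) :
    Nat.card (Subgroup.centralizer {u}) =
      Nat.totient (l ^ (k + 1)) * l ^ v * l ^ (k + 1) * l ^ v := by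
  haveI : NeZero (l ^ (k + 1)) := ⟨pow_ne_zero _ hl.pos.ne'⟩
  set t : ZMod (l ^ (k + 1)) := (l : ZMod (l ^ (k + 1))) ^ v with ht
  set π := ZMod.castHom (dvd_pow_self l (Nat.succ_ne_zero k)) (ZMod l) with hπ
  have hdet : ∀ (d : (ZMod (l ^ (k + 1)))ˣ) (s b c : ZMod (l ^ (k + 1))),
      s * t = 0 → c * t = 0 →
      IsUnit (!![(d : ZMod (l ^ (k + 1))) + s, b; c, (d : ZMod (l ^ (k + 1)))] :
        Matrix (Fin 2) (Fin 2) (ZMod (l ^ (k + 1)))) := by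
    intro d s b c hs hc
    rw [Matrix.isUnit_iff_isUnit_det, Matrix.det_fin_two_of, unit_iff_pi l k hl, map_sub,
      map_mul, map_mul, map_add, pi_zero l k v hl hv s hs, pi_zero l k v hl hv c hc]
    have hd : IsUnit (π (d : ZMod (l ^ (k + 1)))) := d.isUnit.map π
    simpa [hπ] using hd.mul hd
  set K := {x : ZMod (l ^ (k + 1)) // x * t = 0} with hK
  set F : (ZMod (l ^ (k + 1)))ˣ × K × ZMod (l ^ (k + 1)) × K → ↥(Subgroup.centralizer {u}) :=
    fun p => ⟨(hdet p.1 p.2.1.1 p.2.2.1 p.2.2.2.1 p.2.1.2 p.2.2.2.2).unit, by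
      rw [cent_iff t u _ hu]
      rw [IsUnit.unit_spec]
      constructor
      · have : ((p.1 : ZMod (l ^ (k + 1))) + p.2.1.1 - (p.1 : ZMod (l ^ (k + 1)))) * t = 0 := by
          rw [add_sub_cancel_left]; exact p.2.1.2
        simpa using this
      · simpa using p.2.2.2.2⟩ with hF
  have hFbij : Function.Bijective F := by
    constructor
    · rintro ⟨d, s, b, c⟩ ⟨d', s', b', c'⟩ h
      have h1 : (F (d, s, b, c)).1 = (F (d', s', b', c')).1 := by rw [h]
      have h2 : ((F (d, s, b, c)).1 : Matrix (Fin 2) (Fin 2) (ZMod (l ^ (k + 1)))) =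
          ((F (d', s', b', c')).1 : Matrix (Fin 2) (Fin 2) (ZMod (l ^ (k + 1)))) := by rw [h1]
      simp only [hF, IsUnit.unit_spec] at h2
      have he := Matrix.ext_iff.mpr h2
      have e00 := he 0 0
      have e01 := he 0 1
      have e10 := he 1 0
      have e11 := he 1 1
      simp at e00 e01 e10 e11
      have hd : d = d' := Units.ext e11
      refine Prod.ext hd (Prod.ext (Subtype.ext ?_) (Prod.ext e01 (Subtype.ext e10)))
      have : (d : ZMod (l ^ (k + 1))) = (d' : ZMod (l ^ (k + 1))) := by rw [hd]
      rw [this] at e00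
      exact add_left_cancel e00
    · rintro ⟨M, hM⟩
      rw [cent_iff t u _ hu] at hM
      obtain ⟨h1, h2⟩ := hM
      set A : Matrix (Fin 2) (Fin 2) (ZMod (l ^ (k + 1))) := (M : Matrix (Fin 2) (Fin 2) (ZMod (l ^ (k + 1)))) with hA
      have hdetM : IsUnit A.det := (Matrix.isUnit_iff_isUnit_det A).mp M.isUnit
      rw [Matrix.det_fin_two, unit_iff_pi l k hl, map_sub, map_mul, map_mul,
        pi_zero l k v hl hv _ h2, mul_zero, sub_zero] at hdetM
      have hpa : π (A 0 0) = π (A 1 1) := by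
        have := pi_zero l k v hl hv _ h1
        rw [map_sub, sub_eq_zero] at this
        exact this
      rw [hpa] at hdetM
      have hd : IsUnit (A 1 1) := by
        rw [unit_iff_pi l k hl]
        exact isUnit_of_mul_isUnit_left hdetM
      refine ⟨(hd.unit, ⟨A 0 0 - A 1 1, h1⟩, A 0 1, ⟨A 1 0, h2⟩), ?_⟩
      apply Subtype.ext
      apply Units.ext
      simp only [hF, IsUnit.unit_spec]
      conv_rhs => rw [show (M : Matrix (Fin 2) (Fin 2) (ZMod (l ^ (k + 1)))) = A from rfl,
        Matrix.eta_fin_two A]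
      ext i j
      fin_cases i <;> fin_cases j <;> simp <;> ring
  rw [← Nat.card_eq_of_bijective F hFbij, Nat.card_prod, Nat.card_prod, Nat.card_prod,
    card_ann l k v hl hv, Nat.card_zmod, Nat.card_eq_fintype_card,
    ZMod.card_units_eq_totient]
  ring

/-- In `GL₂(ℤ/l^(k+1)ℤ)` with `l` an odd prime, the centralizer of `[[1, l^v],[0,1]]`
(for `0 ≤ v ≤ k`) consists of the matrices `[[a,b],[c,d]]` with `(a-d)·l^v = 0` and
`c·l^v = 0`, and has cardinality `φ(l^(k+1)) · l^v · l^(k+1) · l^v`. -/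
theorem stmt_11 (l k v : ℕ) (hl : l.Prime) (hlodd : Odd l) (hv : v ≤ k)
    (u : GL (Fin 2) (ZMod (l ^ (k + 1))))
    (hu : (u : Matrix (Fin 2) (Fin 2) (ZMod (l ^ (k + 1)))) =
      !![1, (l : ZMod (l ^ (k + 1))) ^ v; 0, 1]) :
    (∀ M : GL (Fin 2) (ZMod (l ^ (k + 1))), M ∈ Subgroup.centralizer {u} ↔
      ((M : Matrix (Fin 2) (Fin 2) (ZMod (l ^ (k + 1)))) 0 0 -
          (M : Matrix (Fin 2) (Fin 2) (ZMod (l ^ (k + 1)))) 1 1) *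
          (l : ZMod (l ^ (k + 1))) ^ v = 0 ∧
        (M : Matrix (Fin 2) (Fin 2) (ZMod (l ^ (k + 1)))) 1 0 *
          (l : ZMod (l ^ (k + 1))) ^ v = 0) ∧
    Nat.card (Subgroup.centralizer {u}) =
      Nat.totient (l ^ (k + 1)) * l ^ v * l ^ (k + 1) * l ^ v := by
  haveI : NeZero (l ^ (k + 1)) := ⟨pow_ne_zero _ hl.pos.ne'⟩
  exact ⟨fun M => cent_iff _ u M hu, card_cent l k v hl hv u hu⟩
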